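/- arXiv:2502.17164 — 2 statements merged into one kernel-verified Lean document; each statement's English description precedes it below -/
import Mathlib

section
/- Let β ∈ C^{1,1}(ℝ) with 0 ≤ β ≤ 1, and let ψ = √(1-β) be Lipschitz. For a lattice function v : ℤ → ℝ define the atomistic component v^a by D₁v^a(η) := ψ(η)·D₁v(η), where D₁v(η) = v(η+1) - v(η). Then for every ξ ∈ ℤ and every integer ρ > 0, |√(1-β(ξ))·D_ρ v(ξ) - D_ρ v^a(ξ)| ≤ ρ^{3/2}·‖∇ψ‖_{L^∞}·‖∇v‖_{L²(ξ, ξ+ρ)}, where D_ρ v(ξ) = v(ξ+ρ) - v(ξ) and ∇v denotes the piecewise constant derivative of the piecewise affine interpolant of v. -/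
open Finset

lemma telescope_int (w : ℤ → ℝ) (a b : ℤ) (h : a ≤ b) :
    w b - w a = ∑ η ∈ Finset.Ico a b, (w (η + 1) - w η) := by
  refine Int.le_induction (motive := fun b _ => w b - w a = ∑ η ∈ Finset.Ico a b, (w (η + 1) - w η)) ?_ ?_ b h
  · simp
  · intro b hb ih
    have hins : Finset.Ico a (b + 1) = insert b (Finset.Ico a b) := by
      ext x; simp only [Finset.mem_Ico, Finset.mem_insert]; omega
    rw [hins, Finset.sum_insert (by simp), ← ih]; ring


/-- Discrete blending estimate: with `ψ = √(1-β)` Lipschitz (constant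
`Lψ = ‖∇ψ‖_{L∞}`), `0 ≤ β ≤ 1`, and the atomistic component `vᵃ` defined by
`D₁vᵃ(η) = ψ(η)·D₁v(η)`, one has for every `ξ` and every integer `ρ > 0`
`|√(1-β ξ)·D_ρ v(ξ) - D_ρ vᵃ(ξ)| ≤ ρ^{3/2}·Lψ·‖∇v‖_{L²(ξ,ξ+ρ)}`,
where `‖∇v‖_{L²(ξ,ξ+ρ)} = √(∑_{η=ξ}^{ξ+ρ-1} (D₁v η)²)`. -/
theorem stmt_2 (β : ℝ → ℝ) (hβ : ∀ x, 0 ≤ β x ∧ β x ≤ 1)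
    (Lψ : ℝ) (hLψ : 0 ≤ Lψ)
    (hLip : ∀ x y : ℝ, |Real.sqrt (1 - β x) - Real.sqrt (1 - β y)| ≤ Lψ * |x - y|)
    (v va : ℤ → ℝ)
    (hva : ∀ η : ℤ, va (η + 1) - va η = Real.sqrt (1 - β η) * (v (η + 1) - v η)) :
    ∀ (ξ ρ : ℤ), 0 < ρ →
      |Real.sqrt (1 - β ξ) * (v (ξ + ρ) - v ξ) - (va (ξ + ρ) - va ξ)|
        ≤ (ρ : ℝ) ^ ((3 : ℝ) / 2) * Lψ *
            Real.sqrt (∑ η ∈ Finset.Ico ξ (ξ + ρ), (v (η + 1) - v η) ^ 2) := by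
  intro ξ ρ hρ
  set s := Finset.Ico ξ (ξ + ρ) with hs
  set S := ∑ η ∈ s, (v (η + 1) - v η) ^ 2 with hS
  have hSnn : 0 ≤ S := Finset.sum_nonneg fun _ _ => sq_nonneg _
  have hρR : (0:ℝ) < (ρ:ℝ) := by exact_mod_cast hρ
  have hsum : Real.sqrt (1 - β ξ) * (v (ξ + ρ) - v ξ) - (va (ξ + ρ) - va ξ)
      = ∑ η ∈ s, (Real.sqrt (1 - β ξ) - Real.sqrt (1 - β η)) * (v (η + 1) - v η) := by
    rw [telescope_int v ξ (ξ + ρ) (by omega), telescope_int va ξ (ξ + ρ) (by omega),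
      Finset.mul_sum, ← Finset.sum_sub_distrib]
    exact Finset.sum_congr rfl fun η _ => by rw [hva]; ring
  rw [hsum]
  calc |∑ η ∈ s, (Real.sqrt (1 - β ξ) - Real.sqrt (1 - β η)) * (v (η + 1) - v η)|
      ≤ ∑ η ∈ s, |(Real.sqrt (1 - β ξ) - Real.sqrt (1 - β η)) * (v (η + 1) - v η)| :=
        Finset.abs_sum_le_sum_abs _ _
    _ ≤ ∑ η ∈ s, (Lψ * ρ) * |v (η + 1) - v η| := by
        refine Finset.sum_le_sum fun η hη => ?_
        rw [abs_mul]
        apply mul_le_mul_of_nonneg_right _ (abs_nonneg _)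
        calc |Real.sqrt (1 - β ξ) - Real.sqrt (1 - β η)| ≤ Lψ * |(ξ:ℝ) - (η:ℝ)| :=
              hLip _ _
          _ ≤ Lψ * ρ := by
              apply mul_le_mul_of_nonneg_left _ hLψ
              simp only [Finset.mem_Ico, hs] at hη
              rw [abs_sub_comm, abs_of_nonneg (by exact_mod_cast sub_nonneg.2 hη.1)]
              have : (η:ℝ) < ξ + ρ := by exact_mod_cast hη.2
              linarith
    _ = (Lψ * ρ) * ∑ η ∈ s, |v (η + 1) - v η| := by rw [Finset.mul_sum]
    _ ≤ (Lψ * ρ) * (Real.sqrt ρ * Real.sqrt S) := by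
        apply mul_le_mul_of_nonneg_left _ (by positivity)
        have hcs := Finset.sum_mul_sq_le_sq_mul_sq s (fun _ => (1:ℝ))
          (fun η => |v (η + 1) - v η|)
        simp only [one_pow, one_mul, sq_abs, Finset.sum_const, nsmul_eq_mul, mul_one] at hcs
        have hcard : ((s.card : ℝ)) = (ρ : ℝ) := by
          rw [hs, Int.card_Ico]
          have : (ξ + ρ - ξ) = ρ := by ring
          rw [this]
          exact_mod_cast Int.toNat_of_nonneg hρ.le
        rw [← Real.sqrt_mul hρR.le]
        rw [Real.le_sqrt (Finset.sum_nonneg fun _ _ => abs_nonneg _) (by positivity)]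
        calc (∑ η ∈ s, |v (η + 1) - v η|) ^ 2 ≤ (s.card : ℝ) * S := hcs
          _ = (ρ:ℝ) * S := by rw [hcard]
    _ = (ρ : ℝ) ^ ((3 : ℝ) / 2) * Lψ * Real.sqrt S := by
        rw [show (3:ℝ)/2 = 1 + 1/2 by norm_num, Real.rpow_add hρR, Real.rpow_one,
          Real.sqrt_eq_rpow]
        ring
end

section
/- Let W ∈ C³(ℝ) with bounded second and third derivatives (|W''| ≤ M₂, |W'''| ≤ M₃), let T = [a,b] with u ∈ H²(T), and let I_h u be the affine interpolant (preserving ∫_T ∇u). Then for every constant c ∈ ℝ, |∫_T (W'(∇I_h y) - W'(∇y))·c dx| ≤ C·‖∇I_h u - ∇u‖²_{L²(T)}·|c| ≤ C'·h_T²·‖∇²u‖²_{L²(T)}·|c|, where y = Fx + u, h_T = b - a, and C, C' depend only on M₂, M₃. -/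
open MeasureTheory intervalIntegral

/-- Elementary Cauchy–Schwarz on an interval for a continuous function. -/
lemma cs_aux (a b : ℝ) (hab : a < b) (f : ℝ → ℝ) (hf : Continuous f) :
    (∫ x in a..b, |f x|) ^ 2 ≤ (b - a) * ∫ x in a..b, (f x) ^ 2 := by
  set L : ℝ := b - a with hL
  have hL0 : 0 < L := by simp [hL]; linarith
  set I : ℝ := ∫ x in a..b, |f x| with hI
  have hint1 : IntervalIntegrable (fun x => |f x|) volume a b :=
    (hf.abs).intervalIntegrable a b
  have hint2 : IntervalIntegrable (fun x => (f x) ^ 2) volume a b :=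
    (hf.pow 2).intervalIntegrable a b
  have h0 : 0 ≤ ∫ x in a..b, (|f x| - I / L) ^ 2 :=
    intervalIntegral.integral_nonneg hab.le (fun x _ => sq_nonneg _)
  have hexp : (∫ x in a..b, (|f x| - I / L) ^ 2)
      = (∫ x in a..b, (f x) ^ 2) - 2 * (I / L) * I + (I / L) ^ 2 * L := by
    have : ∀ x : ℝ, (|f x| - I / L) ^ 2
        = (f x) ^ 2 - (2 * (I / L)) * |f x| + (I / L) ^ 2 := by
      intro x
      have := sq_abs (f x)
      ring_nf
      nlinarith [sq_abs (f x)]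
    rw [intervalIntegral.integral_congr (g := fun x => (f x) ^ 2 - (2 * (I / L)) * |f x| + (I / L) ^ 2) (fun x _ => this x)]
    rw [intervalIntegral.integral_add (hint2.sub (hint1.const_mul _)) intervalIntegrable_const,
        intervalIntegral.integral_sub hint2 (hint1.const_mul _),
        intervalIntegral.integral_const_mul, intervalIntegral.integral_const]
    rw [← hI]
    ring_nf
    rw [hL]
    ring
  rw [hexp] at h0
  have : I ^ 2 / L ≤ ∫ x in a..b, (f x) ^ 2 := by
    have h1 : 2 * (I / L) * I = 2 * I ^ 2 / L := by ring
    have h2 : (I / L) ^ 2 * L = I ^ 2 / L := by field_simp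
    rw [h1, h2] at h0
    have h3 : 2 * I ^ 2 / L = 2 * (I ^ 2 / L) := by ring
    linarith
  calc I ^ 2 = (I ^ 2 / L) * L := by field_simp
  _ ≤ (∫ x in a..b, (f x) ^ 2) * L := by
      exact mul_le_mul_of_nonneg_right this hL0.le
  _ = L * ∫ x in a..b, (f x) ^ 2 := mul_comm _ _

lemma taylor_aux (W : ℝ → ℝ) (M₃ : ℝ) (hW : ContDiff ℝ 3 W)
    (hM₃ : ∀ t : ℝ, |iteratedDeriv 3 W t| ≤ M₃) (p q : ℝ) :
    |deriv W q - deriv W p - deriv (deriv W) p * (q - p)| ≤ M₃ * (q - p) ^ 2 := by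
  have h3 : (3 : WithTop ℕ∞) = 2 + 1 := by norm_num
  have hW' : ContDiff ℝ (2 + 1) W := by rw [← h3]; exact hW
  have hd1 : ContDiff ℝ 2 (deriv W) := (contDiff_succ_iff_deriv.mp hW').2.2
  have h2 : (2 : WithTop ℕ∞) = 1 + 1 := by norm_num
  have hd1' : ContDiff ℝ (1 + 1) (deriv W) := by rw [← h2]; exact hd1
  have hd2 : ContDiff ℝ 1 (deriv (deriv W)) := (contDiff_succ_iff_deriv.mp hd1').2.2
  have hdiff1 : Differentiable ℝ (deriv W) := hd1.differentiable (by norm_num)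
  have hdiff2 : Differentiable ℝ (deriv (deriv W)) := hd2.differentiable one_ne_zero
  have hiter : iteratedDeriv 3 W = deriv (deriv (deriv W)) := by
    simp [iteratedDeriv_succ, iteratedDeriv_zero]
  -- W'' is M₃-Lipschitz
  have lip : ∀ x y : ℝ, |deriv (deriv W) y - deriv (deriv W) x| ≤ M₃ * |y - x| := by
    intro x y
    have := Convex.norm_image_sub_le_of_norm_deriv_le
      (f := deriv (deriv W)) (s := Set.univ)
      (fun z _ => hdiff2 z)
      (fun z _ => by
        have := hM₃ z
        rw [hiter] at this
        simpa [Real.norm_eq_abs] using this)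
      convex_univ (Set.mem_univ x) (Set.mem_univ y)
    simpa [Real.norm_eq_abs] using this
  -- auxiliary function
  set K : ℝ := deriv (deriv W) p with hK
  set g : ℝ → ℝ := fun x => deriv W x - K * x with hg
  have hgd : ∀ x : ℝ, HasDerivAt g (deriv (deriv W) x - K) x := by
    intro x
    have h1 : HasDerivAt (deriv W) (deriv (deriv W) x) x := (hdiff1 x).hasDerivAt
    exact h1.sub (by simpa using (hasDerivAt_id x).const_mul K)
  have key := Convex.norm_image_sub_le_of_norm_hasDerivWithin_le
    (f := g) (f' := fun x => deriv (deriv W) x - K) (C := M₃ * |q - p|) (s := Set.uIcc p q)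
    (fun x _ => (hgd x).hasDerivWithinAt)
    (fun x hx => by
      have h1 : |deriv (deriv W) x - K| ≤ M₃ * |x - p| := lip p x
      have h2 : |x - p| ≤ |q - p| := by
        rcases Set.mem_uIcc.mp hx with ⟨h, h'⟩ | ⟨h, h'⟩ <;> rw [abs_sub_le_iff] <;>
          constructor <;> cases abs_cases (q - p) <;> linarith
      have hM0 : 0 ≤ M₃ := le_trans (abs_nonneg _) (hM₃ 0)
      calc ‖deriv (deriv W) x - K‖ = |deriv (deriv W) x - K| := rfl
      _ ≤ M₃ * |x - p| := h1
      _ ≤ M₃ * |q - p| := mul_le_mul_of_nonneg_left h2 hM0)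
    (convex_uIcc p q) Set.left_mem_uIcc Set.right_mem_uIcc
  have : g q - g p = deriv W q - deriv W p - K * (q - p) := by simp [hg]; ring
  rw [this] at key
  calc |deriv W q - deriv W p - K * (q - p)| ≤ M₃ * |q - p| * ‖q - p‖ := key
  _ = M₃ * (q - p) ^ 2 := by
      rw [Real.norm_eq_abs, mul_assoc, ← abs_mul]
      rw [show (q-p)*(q-p) = (q-p)^2 by ring, abs_of_nonneg (sq_nonneg _)]

/-- Coarsening error of the nonlinear Cauchy-Born stress on one element:
with `|W''| ≤ M₂`, `|W'''| ≤ M₃`, `y = Fx + u`, `∇I_h u = (u b - u a)/(b-a)`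
constant, there are constants `C, C'` depending only on `M₂, M₃` such that for
every element `[a,b]`, every `u ∈ H²` and every constant test gradient `c`,
`|∫_T (W'(∇I_h y) - W'(∇y))·c| ≤ C·‖∇I_h u - ∇u‖²_{L²(T)}·|c|
  ≤ C'·h_T²·‖∇²u‖²_{L²(T)}·|c|`. -/
theorem stmt_13 (W : ℝ → ℝ) (M₂ M₃ : ℝ) (hW : ContDiff ℝ 3 W)
    (hM₂ : ∀ t : ℝ, |deriv (deriv W) t| ≤ M₂)
    (hM₃ : ∀ t : ℝ, |iteratedDeriv 3 W t| ≤ M₃) :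
    ∃ C C' : ℝ, 0 < C ∧ 0 < C' ∧
      ∀ (F a b c : ℝ) (u : ℝ → ℝ), a < b → ContDiff ℝ 2 u →
        |∫ x in a..b,
            (deriv W (F + (u b - u a) / (b - a)) - deriv W (F + deriv u x)) * c|
          ≤ C * (∫ x in a..b, ((u b - u a) / (b - a) - deriv u x) ^ 2) * |c| ∧
        C * (∫ x in a..b, ((u b - u a) / (b - a) - deriv u x) ^ 2) * |c|
          ≤ C' * (b - a) ^ 2 * (∫ x in a..b, (deriv (deriv u) x) ^ 2) * |c| := by
  have hM0 : 0 ≤ M₃ := le_trans (abs_nonneg _) (hM₃ 0)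
  refine ⟨M₃ + 1, M₃ + 1, by linarith, by linarith, ?_⟩
  intro F a b c u hab hu
  set L : ℝ := b - a with hL
  have hL0 : 0 < L := by rw [hL]; linarith
  set g : ℝ := (u b - u a) / L with hg
  -- regularity of u
  have hu2 : ContDiff ℝ (1 + 1) u := by
    have : ((2 : ℕ) : WithTop ℕ∞) = 1 + 1 := by norm_num
    rw [← this]; exact hu
  have hudiff : Differentiable ℝ u := hu.differentiable (by norm_num)
  have hu'cd : ContDiff ℝ 1 (deriv u) := (contDiff_succ_iff_deriv.mp hu2).2.2
  have hu'c : Continuous (deriv u) := hu'cd.continuous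
  have hu'diff : Differentiable ℝ (deriv u) := hu'cd.differentiable one_ne_zero
  have hu''c : Continuous (deriv (deriv u)) := hu'cd.continuous_deriv le_rfl
  -- regularity of W
  have hW' : ContDiff ℝ (2 + 1) W := by
    have : ((3 : ℕ) : WithTop ℕ∞) = 2 + 1 := by norm_num
    rw [← this]; exact hW
  have hW1 : ContDiff ℝ 2 (deriv W) := (contDiff_succ_iff_deriv.mp hW').2.2
  have hW'c : Continuous (deriv W) := hW1.continuous
  -- FTC
  have hFTC : (∫ x in a..b, deriv u x) = u b - u a :=
    intervalIntegral.integral_deriv_eq_sub (fun x _ => hudiff x)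
      (hu'c.intervalIntegrable a b)
  have hzero : (∫ x in a..b, (deriv u x - g)) = 0 := by
    rw [intervalIntegral.integral_sub (hu'c.intervalIntegrable a b)
        intervalIntegrable_const, hFTC, intervalIntegral.integral_const]
    rw [hg, smul_eq_mul, ← hL]
    field_simp
    ring
  -- Taylor remainder
  set R : ℝ → ℝ := fun x => deriv W (F + deriv u x) - deriv W (F + g)
      - deriv (deriv W) (F + g) * (deriv u x - g) with hR
  have hRcont : Continuous R := by
    apply Continuous.sub
    · exact (hW'c.comp (continuous_const.add hu'c)).sub continuous_const
    · exact continuous_const.mul (hu'c.sub continuous_const)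
  have hRbound : ∀ x : ℝ, |R x| ≤ M₃ * (g - deriv u x) ^ 2 := by
    intro x
    have := taylor_aux W M₃ hW hM₃ (F + g) (F + deriv u x)
    have he : F + deriv u x - (F + g) = deriv u x - g := by ring
    rw [he] at this
    have he2 : (deriv u x - g) ^ 2 = (g - deriv u x) ^ 2 := by ring
    rw [he2] at this
    exact this
  -- splitting the integral
  have hRint : IntervalIntegrable R volume a b := hRcont.intervalIntegrable a b
  have hsub : IntervalIntegrable (fun x => deriv u x - g) volume a b :=
    (hu'c.sub continuous_const).intervalIntegrable a b
  have hsplit : (∫ x in a..b, (deriv W (F + g) - deriv W (F + deriv u x)))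
      = -∫ x in a..b, R x := by
    have hcongr : ∀ x ∈ Set.uIcc a b,
        deriv W (F + g) - deriv W (F + deriv u x)
          = -(R x) - deriv (deriv W) (F + g) * (deriv u x - g) := by
      intro x _; rw [hR]; ring
    rw [intervalIntegral.integral_congr hcongr]
    have h1 : IntervalIntegrable (fun x => -R x) volume a b := hRint.neg
    rw [intervalIntegral.integral_sub h1 (hsub.const_mul _),
        intervalIntegral.integral_const_mul, hzero, intervalIntegral.integral_neg,
        mul_zero, sub_zero]
  -- the squared-difference integrals
  set X : ℝ := ∫ x in a..b, (g - deriv u x) ^ 2 with hX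
  set Y : ℝ := ∫ x in a..b, (deriv (deriv u) x) ^ 2 with hY
  have hsqint : IntervalIntegrable (fun x => (g - deriv u x) ^ 2) volume a b :=
    ((continuous_const.sub hu'c).pow 2).intervalIntegrable a b
  have hX0 : 0 ≤ X :=
    intervalIntegral.integral_nonneg hab.le (fun x _ => sq_nonneg _)
  have hY0 : 0 ≤ Y :=
    intervalIntegral.integral_nonneg hab.le (fun x _ => sq_nonneg _)
  -- first bound
  have habs : |∫ x in a..b, (deriv W (F + g) - deriv W (F + deriv u x))| ≤ M₃ * X := by
    rw [hsplit, abs_neg]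
    calc |∫ x in a..b, R x| ≤ abs (∫ x in a..b, |R x|) := by
          simpa [Real.norm_eq_abs] using
            intervalIntegral.norm_integral_le_abs_integral_norm (f := R) (a := a) (b := b)
    _ = ∫ x in a..b, |R x| := abs_of_nonneg
          (intervalIntegral.integral_nonneg hab.le (fun x _ => abs_nonneg _))
    _ ≤ ∫ x in a..b, M₃ * (g - deriv u x) ^ 2 :=
          intervalIntegral.integral_mono_on hab.le (hRcont.abs.intervalIntegrable a b)
            (hsqint.const_mul _) (fun x _ => hRbound x)
    _ = M₃ * X := intervalIntegral.integral_const_mul _ _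
  -- Poincare estimate
  set A : ℝ := ∫ t in a..b, |deriv (deriv u) t| with hA
  have hAint : IntervalIntegrable (fun t => |deriv (deriv u) t|) volume a b :=
    hu''c.abs.intervalIntegrable a b
  have hA0 : 0 ≤ A :=
    intervalIntegral.integral_nonneg hab.le (fun x _ => abs_nonneg _)
  have hstep : ∀ x ∈ Set.Icc a b, ∀ t ∈ Set.Icc a b,
      |deriv u t - deriv u x| ≤ A := by
    intro x hx t ht
    have heq : (∫ s in x..t, deriv (deriv u) s) = deriv u t - deriv u x :=
      intervalIntegral.integral_deriv_eq_sub (fun s _ => hu'diff s)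
        (hu''c.intervalIntegrable x t)
    rw [← heq]
    have hsub2 : Set.uIoc x t ⊆ Set.uIoc a b := by
      rw [Set.uIoc, Set.uIoc]
      apply Set.Ioc_subset_Ioc
      · exact le_min ((min_le_left a b).trans hx.1) ((min_le_left a b).trans ht.1)
      · exact max_le (hx.2.trans (le_max_right a b)) (ht.2.trans (le_max_right a b))
    calc |∫ s in x..t, deriv (deriv u) s| ≤ abs (∫ s in x..t, |deriv (deriv u) s|) := by
          simpa [Real.norm_eq_abs] using
            intervalIntegral.norm_integral_le_abs_integral_norm
              (f := deriv (deriv u)) (a := x) (b := t)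
    _ ≤ abs (∫ s in a..b, |deriv (deriv u) s|) :=
          intervalIntegral.abs_integral_mono_interval hsub2
            (Filter.Eventually.of_forall (fun s => abs_nonneg _)) hAint
    _ = A := abs_of_nonneg hA0
  have hpt : ∀ x ∈ Set.Icc a b, (g - deriv u x) ^ 2 ≤ L * Y := by
    intro x hx
    have hnum : (∫ t in a..b, (deriv u t - deriv u x))
        = (u b - u a) - deriv u x * L := by
      rw [intervalIntegral.integral_sub (hu'c.intervalIntegrable a b)
          intervalIntegrable_const, hFTC, intervalIntegral.integral_const]
      rw [smul_eq_mul, ← hL]; ring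
    have hgx : g - deriv u x = (∫ t in a..b, (deriv u t - deriv u x)) / L := by
      rw [hnum, hg]; field_simp
    have hb1 : |∫ t in a..b, (deriv u t - deriv u x)| ≤ A * L := by
      calc |∫ t in a..b, (deriv u t - deriv u x)|
          ≤ abs (∫ t in a..b, |deriv u t - deriv u x|) := by
            simpa [Real.norm_eq_abs] using
              intervalIntegral.norm_integral_le_abs_integral_norm
                (f := fun t => deriv u t - deriv u x) (a := a) (b := b)
      _ = ∫ t in a..b, |deriv u t - deriv u x| := abs_of_nonneg
            (intervalIntegral.integral_nonneg hab.le (fun t _ => abs_nonneg _))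
      _ ≤ ∫ t in a..b, A :=
            intervalIntegral.integral_mono_on hab.le
              ((hu'c.sub continuous_const).abs.intervalIntegrable a b)
              intervalIntegrable_const (fun t ht => hstep x hx t ht)
      _ = A * L := by rw [intervalIntegral.integral_const, smul_eq_mul, ← hL]; ring
    have hgA : |g - deriv u x| ≤ A := by
      rw [hgx, abs_div, abs_of_pos hL0]
      rw [div_le_iff₀ hL0]
      exact hb1
    have hA2 : A ^ 2 ≤ L * Y := by
      rw [hY, hL]
      exact cs_aux a b hab (deriv (deriv u)) hu''c
    calc (g - deriv u x) ^ 2 = |g - deriv u x| ^ 2 := (sq_abs _).symm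
    _ ≤ A ^ 2 := pow_le_pow_left₀ (abs_nonneg _) hgA 2
    _ ≤ L * Y := hA2
  have hXY : X ≤ L ^ 2 * Y := by
    calc X ≤ ∫ _x in a..b, L * Y :=
          intervalIntegral.integral_mono_on hab.le hsqint
            intervalIntegrable_const hpt
    _ = L ^ 2 * Y := by rw [intervalIntegral.integral_const, smul_eq_mul, ← hL]; ring
  constructor
  · -- first inequality
    rw [intervalIntegral.integral_mul_const, abs_mul]
    calc |∫ x in a..b, (deriv W (F + g) - deriv W (F + deriv u x))| * |c|
        ≤ (M₃ * X) * |c| := mul_le_mul_of_nonneg_right habs (abs_nonneg c)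
    _ ≤ ((M₃ + 1) * X) * |c| := by nlinarith [abs_nonneg c]
    _ = (M₃ + 1) * X * |c| := rfl
  · -- second inequality
    have h1 : (M₃ + 1) * X ≤ (M₃ + 1) * (L ^ 2 * Y) :=
      mul_le_mul_of_nonneg_left hXY (by linarith)
    calc (M₃ + 1) * X * |c| ≤ ((M₃ + 1) * (L ^ 2 * Y)) * |c| :=
          mul_le_mul_of_nonneg_right h1 (abs_nonneg c)
    _ = (M₃ + 1) * L ^ 2 * Y * |c| := by ring
end
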